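/- arXiv:2209.01503 — 2 statements merged into one kernel-verified Lean document; each statement's English description precedes it below -/
import Mathlib

section
/- For any real numbers a₀, b₀, λ ≥ 0 there exists T > 0 such that any sequences (a_n)_{n≥0} and (b_n)_{n≥0} of nonnegative real numbers with the given values a₀, b₀ that satisfy, for all n ≥ 0, the recursive inequalities a_{n+1} ≤ λ·√(2T+1)·b_n and b_{n+1} ≤ T·(1+λ)·a_n·(2·Σ_{k=0}^{n} a_k + Σ_{k=0}^{n} b_k) + T·λ·b_n·Σ_{k=0}^{n} a_k, have the property that both series Σ_{k=0}^{∞} a_k and Σ_{k=0}^{∞} b_k converge. -/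
/-- For any `a₀, b₀, λ ≥ 0` there exists `T > 0` such that any nonnegative
sequences `(a_n)`, `(b_n)` starting from `a₀, b₀` and satisfying the recursive inequalities
`a_{n+1} ≤ λ√(2T+1)·b_n` and
`b_{n+1} ≤ T(1+λ)·a_n·(2∑_{k≤n} a_k + ∑_{k≤n} b_k) + Tλ·b_n·∑_{k≤n} a_k`
have convergent series `∑ a_k` and `∑ b_k`. -/
theorem iteration_scheme_series_converge (a₀ b₀ lam : ℝ)
    (ha₀ : 0 ≤ a₀) (hb₀ : 0 ≤ b₀) (hlam : 0 ≤ lam) :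
    ∃ T : ℝ, 0 < T ∧
      ∀ A B : ℕ → ℝ, A 0 = a₀ → B 0 = b₀ →
        (∀ n, 0 ≤ A n) → (∀ n, 0 ≤ B n) →
        (∀ n, A (n + 1) ≤ lam * Real.sqrt (2 * T + 1) * B n) →
        (∀ n, B (n + 1) ≤
            T * (1 + lam) * A n *
                (2 * ∑ k ∈ Finset.range (n + 1), A k + ∑ k ∈ Finset.range (n + 1), B k)
              + T * lam * B n * ∑ k ∈ Finset.range (n + 1), A k) →
        Summable A ∧ Summable B := by
  have hs3pos : (0:ℝ) < Real.sqrt 3 := Real.sqrt_pos.mpr (by norm_num)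
  set c : ℝ := 1 / (2 * Real.sqrt 3 * (lam + 1)) with hc
  have hcpos : 0 < c := div_pos one_pos (by positivity)
  set M : ℝ := a₀ + b₀ / c + 1 with hM_def
  have hM : 0 < M := by
    have : 0 ≤ b₀ / c := div_nonneg hb₀ hcpos.le
    rw [hM_def]; linarith
  set D : ℝ := (1 + lam) * (4 * M + 2 * (c * M)) + 2 * lam * (c * M) + 1 with hD_def
  have hD : 0 < D := by positivity
  refine ⟨min 1 (c / (2 * D)), lt_min one_pos (by positivity), ?_⟩
  set T : ℝ := min 1 (c / (2 * D)) with hT_def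
  have hTpos : 0 < T := lt_min one_pos (by positivity)
  have hT1 : T ≤ 1 := min_le_left _ _
  have hT2 : T ≤ c / (2 * D) := min_le_right _ _
  intro A B hA0 hB0 hAnn hBnn hrecA hrecB
  have hsqrt : Real.sqrt (2 * T + 1) ≤ Real.sqrt 3 :=
    Real.sqrt_le_sqrt (by linarith)
  have hkey : lam * Real.sqrt 3 * c ≤ 1 / 2 := by
    rw [hc, mul_one_div, div_le_div_iff₀ (by positivity) (by norm_num)]
    nlinarith [hs3pos]
  have hTD : T * (D - 1) ≤ c / 2 := by
    have h1 : T * D ≤ c / (2 * D) * D := mul_le_mul_of_nonneg_right hT2 hD.le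
    have h2 : c / (2 * D) * D = c / 2 := by field_simp
    nlinarith
  -- main inductive bound
  have claim : ∀ n, A n ≤ M * (1/2) ^ n ∧ B n ≤ c * (M * (1/2) ^ n) := by
    intro n
    induction n using Nat.strong_induction_on with
    | _ n ih =>
      match n with
      | 0 =>
        constructor
        · have : 0 ≤ b₀ / c := div_nonneg hb₀ hcpos.le
          rw [hA0]; simp only [pow_zero, mul_one]; rw [hM_def]; linarith
        · have hbc : b₀ / c ≤ M := by rw [hM_def]; linarith
          have : b₀ ≤ M * c := (div_le_iff₀ hcpos).mp hbc
          rw [hB0]; simp only [pow_zero, mul_one]; linarith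
      | Nat.succ n =>
        have hAn := (ih n (Nat.lt_succ_self n)).1
        have hBn := (ih n (Nat.lt_succ_self n)).2
        have hSAnn : 0 ≤ ∑ k ∈ Finset.range (n + 1), A k :=
          Finset.sum_nonneg fun k _ => hAnn k
        have hSBnn : 0 ≤ ∑ k ∈ Finset.range (n + 1), B k :=
          Finset.sum_nonneg fun k _ => hBnn k
        have hSA : ∑ k ∈ Finset.range (n + 1), A k ≤ 2 * M := by
          calc ∑ k ∈ Finset.range (n + 1), A k
              ≤ ∑ k ∈ Finset.range (n + 1), M * (1/2) ^ k :=
                Finset.sum_le_sum fun k hk => (ih k (Finset.mem_range.mp hk)).1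
            _ = M * ∑ k ∈ Finset.range (n + 1), (1/2 : ℝ) ^ k := by
                rw [Finset.mul_sum]
            _ ≤ M * 2 := mul_le_mul_of_nonneg_left (sum_geometric_two_le _) hM.le
            _ = 2 * M := mul_comm _ _
        have hSB : ∑ k ∈ Finset.range (n + 1), B k ≤ 2 * (c * M) := by
          calc ∑ k ∈ Finset.range (n + 1), B k
              ≤ ∑ k ∈ Finset.range (n + 1), c * (M * (1/2) ^ k) :=
                Finset.sum_le_sum fun k hk => (ih k (Finset.mem_range.mp hk)).2
            _ = (c * M) * ∑ k ∈ Finset.range (n + 1), (1/2 : ℝ) ^ k := by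
                rw [Finset.mul_sum]; congr 1; ext k; ring
            _ ≤ (c * M) * 2 :=
                mul_le_mul_of_nonneg_left (sum_geometric_two_le _) (by positivity)
            _ = 2 * (c * M) := mul_comm _ _
        constructor
        · calc A (n + 1) ≤ lam * Real.sqrt (2 * T + 1) * B n := hrecA n
            _ ≤ lam * Real.sqrt 3 * (c * (M * (1/2) ^ n)) :=
                mul_le_mul (mul_le_mul_of_nonneg_left hsqrt hlam) hBn (hBnn n)
                  (by positivity)
            _ = (lam * Real.sqrt 3 * c) * (M * (1/2) ^ n) := by ring
            _ ≤ (1/2) * (M * (1/2) ^ n) :=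
                mul_le_mul_of_nonneg_right hkey (by positivity)
            _ = M * (1/2) ^ (n + 1) := by ring
        · have e1 : 2 * (∑ k ∈ Finset.range (n + 1), A k)
              + ∑ k ∈ Finset.range (n + 1), B k ≤ 4 * M + 2 * (c * M) := by linarith
          have h1 : T * (1 + lam) * A n *
              (2 * (∑ k ∈ Finset.range (n + 1), A k) + ∑ k ∈ Finset.range (n + 1), B k)
              ≤ T * (1 + lam) * (M * (1/2) ^ n) * (4 * M + 2 * (c * M)) := by
            apply mul_le_mul _ e1 (by linarith) _
            · exact mul_le_mul_of_nonneg_left hAn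
                (mul_nonneg hTpos.le (by linarith))
            · have : (0:ℝ) ≤ T * (1 + lam) := mul_nonneg hTpos.le (by linarith)
              positivity
          have h2 : T * lam * B n * ∑ k ∈ Finset.range (n + 1), A k
              ≤ T * lam * (c * (M * (1/2) ^ n)) * (2 * M) := by
            apply mul_le_mul _ hSA hSAnn _
            · exact mul_le_mul_of_nonneg_left hBn (mul_nonneg hTpos.le hlam)
            · have : (0:ℝ) ≤ T * lam := mul_nonneg hTpos.le hlam
              positivity
          calc B (n + 1)
              ≤ T * (1 + lam) * A n *
                  (2 * (∑ k ∈ Finset.range (n + 1), A k)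
                    + ∑ k ∈ Finset.range (n + 1), B k)
                + T * lam * B n * ∑ k ∈ Finset.range (n + 1), A k := by
                  have := hrecB n; linarith
            _ ≤ T * (1 + lam) * (M * (1/2) ^ n) * (4 * M + 2 * (c * M))
                + T * lam * (c * (M * (1/2) ^ n)) * (2 * M) := add_le_add h1 h2
            _ = (M * (1/2) ^ n) * (T * (D - 1)) := by rw [hD_def]; ring
            _ ≤ (M * (1/2) ^ n) * (c / 2) :=
                mul_le_mul_of_nonneg_left hTD (by positivity)
            _ = c * (M * (1/2) ^ (n + 1)) := by ring
  constructor
  · exact Summable.of_nonneg_of_le hAnn (fun n => (claim n).1)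
      (summable_geometric_two.mul_left M)
  · exact Summable.of_nonneg_of_le hBnn (fun n => (claim n).2)
      ((summable_geometric_two.mul_left M).mul_left c)
end

section
/- Fix real numbers δ̃₁, δ̃₂, γ̃₁, γ̃₂ and u, y, z ∈ ℝ, define γ(ε) = (u + δ̃₁ε − γ̃₁ε²)²/(1 − δ̃₂ε + γ̃₂ε²)² + (y + 2γ̃₁ε²)²/(1 + 2γ̃₂ε²)² + (z − δ̃₁ε − γ̃₁ε²)²/(1 + δ̃₂ε + γ̃₂ε²)², let M = max{1, |δ̃₁|, 2|γ̃₁|, |δ̃₂|, 2|γ̃₂|} and ρ² = u² + y² + z². Then for every ε ≥ 0 with M·ε ≤ 1/4, the third derivative in ε of ε ↦ exp(−γ(ε)/2) satisfies |d³/dε³ exp(−γ(ε)/2)| ≤ 500³·M³·(ρ² + 1)³·exp(−ρ²/9). -/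
open Metric Complex

/-- Cauchy estimate for iterated derivatives. -/
lemma cauchy_bound_aux {f : ℂ → ℂ} {c : ℂ} {R C : ℝ} (hR : 0 < R)
    (hf : DifferentiableOn ℂ f (closedBall c R))
    (hC : ∀ w ∈ sphere c R, ‖f w‖ ≤ C) (n : ℕ) :
    ‖iteratedDeriv n f c‖ ≤ n.factorial * C / R ^ n := by
  lift R to NNReal using hR.le with R' hR'
  have hR0 : (0 : NNReal) < R' := by exact_mod_cast hR
  have h := hf.hasFPowerSeriesOnBall hR0
  set p := cauchyPowerSeries f c R' with hp
  have hiter : iteratedDeriv n f c = n.factorial • (p n fun _ => (1:ℂ)) := by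
    rw [iteratedDeriv_eq_iteratedFDeriv, ← h.factorial_smul 1 n]
  have hcont : Continuous fun θ : ℝ => ‖f (circleMap c R' θ)‖ := by
    apply Continuous.norm
    exact hf.continuousOn.comp_continuous (continuous_circleMap _ _)
      (fun θ => sphere_subset_closedBall (circleMap_mem_sphere _ hR.le _))
  have hint : (∫ θ : ℝ in (0)..2 * Real.pi, ‖f (circleMap c R' θ)‖) ≤ 2 * Real.pi * C := by
    have := intervalIntegral.integral_mono_on (μ := MeasureTheory.volume)
      Real.two_pi_pos.le (hcont.intervalIntegrable _ _) intervalIntegrable_const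
      (fun θ _ => hC _ (circleMap_mem_sphere _ hR.le θ))
    simpa using this
  have hC0 : 0 ≤ C := le_trans (norm_nonneg _) (hC _ (circleMap_mem_sphere c hR.le 0))
  have hpn : ‖p n fun _ => (1:ℂ)‖ ≤ C / R' ^ n := by
    calc ‖p n fun _ => (1:ℂ)‖ ≤ ‖p n‖ * ∏ _i : Fin n, ‖(1:ℂ)‖ := (p n).le_opNorm _
    _ = ‖p n‖ := by simp
    _ ≤ ((2 * Real.pi)⁻¹ * ∫ θ : ℝ in (0)..2 * Real.pi, ‖f (circleMap c R' θ)‖) * |(R':ℝ)|⁻¹ ^ n :=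
        norm_cauchyPowerSeries_le f c R' n
    _ ≤ ((2 * Real.pi)⁻¹ * (2 * Real.pi * C)) * |(R':ℝ)|⁻¹ ^ n := by gcongr
    _ = C / R' ^ n := by
        rw [abs_of_pos hR]
        field_simp
        rw [one_div, inv_pow, mul_assoc, inv_mul_cancel₀ (pow_ne_zero _ hR.ne'), mul_one]
  rw [hiter, nsmul_eq_mul, norm_mul]
  simp only [Complex.norm_natCast]
  rw [div_eq_mul_inv, mul_assoc, ← div_eq_mul_inv]
  gcongr

/-- Transfer of iterated derivatives from ℂ to ℝ for real parts. -/
lemma iteratedDeriv_re_comp_aux {F : ℂ → ℂ} {U : Set ℂ} (hU : IsOpen U)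
    (hF : DifferentiableOn ℂ F U) (n : ℕ) :
    ∀ x : ℝ, (x : ℂ) ∈ U →
      iteratedDeriv n (fun t : ℝ => (F t).re) x = (iteratedDeriv n F x).re := by
  have hA : AnalyticOnNhd ℂ F U := hF.analyticOnNhd hU
  induction n with
  | zero => intro x _; simp
  | succ n ih =>
    intro x hx
    have hAn : AnalyticOnNhd ℂ (iteratedDeriv n F) U := by
      rw [iteratedDeriv_eq_iterate]; exact hA.iterated_deriv n
    have hUopen : IsOpen {t : ℝ | (t : ℂ) ∈ U} := hU.preimage Complex.continuous_ofReal
    have hev : (fun t : ℝ => iteratedDeriv n (fun s : ℝ => (F s).re) t)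
        =ᶠ[nhds x] fun t : ℝ => (iteratedDeriv n F t).re := by
      filter_upwards [hUopen.mem_nhds hx] with t ht using ih t ht
    rw [iteratedDeriv_succ, hev.deriv_eq]
    have hd : HasDerivAt (fun t : ℝ => (iteratedDeriv n F t).re)
        (deriv (iteratedDeriv n F) x).re x :=
      ((hAn x hx).differentiableAt.hasDerivAt).real_of_complex
    rw [hd.deriv, iteratedDeriv_succ]

set_option maxHeartbeats 2000000 in
/-- Core polynomial inequality in real coordinates. -/
lemma core_ineq_aux (a x s b t : ℝ) (hx : |x - a| ≤ 0.33) (hs : |s| ≤ 0.016)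
    (hb : |b - 1| ≤ 0.33) (ht : |t| ≤ 0.016) :
    (2/9 * a^2 - 2) * (b^2 + t^2)^2 ≤ (x^2 - s^2) * (b^2 - t^2) + 4*x*s*b*t := by
  obtain ⟨hx1, hx2'⟩ := abs_le.mp hx
  obtain ⟨hs1, hs2⟩ := abs_le.mp hs
  obtain ⟨hb1, hb2⟩ := abs_le.mp hb
  obtain ⟨ht1, ht2⟩ := abs_le.mp ht
  have hr2' : (x-a)^2 ≤ 0.1089 := by nlinarith
  have hs2' : s^2 ≤ 0.000256 := by nlinarith
  have ht2' : t^2 ≤ 0.000256 := by nlinarith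
  have hb2l : (0.4489:ℝ) ≤ b^2 := by nlinarith
  have hb2u : b^2 ≤ 1.7689 := by nlinarith
  have ha2 : (0:ℝ) ≤ a^2 := sq_nonneg a
  have hx2 : x^2 ≤ 2*a^2 + 0.2178 := by nlinarith [sq_nonneg (x - 2*a)]
  have key1 : (s*b - x*t)^2 ≤ 0.00102 + 0.00103*a^2 := by
    have e1 : s^2*b^2 ≤ 0.000256*1.7689 :=
      mul_le_mul hs2' hb2u (sq_nonneg b) (by norm_num)
    have e2 : x^2*t^2 ≤ (2*a^2+0.2178)*0.000256 :=
      mul_le_mul hx2 ht2' (sq_nonneg t) (by positivity)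
    nlinarith [sq_nonneg (s*b + x*t), e1, e2, ha2]
  have key2 : 0.99*(x^2*b^2) - 0.0000066 ≤ (x*b + s*t)^2 := by
    have e3 : s^2*t^2 ≤ 0.000256*0.000256 :=
      mul_le_mul hs2' ht2' (sq_nonneg t) (by norm_num)
    nlinarith [sq_nonneg (0.1*(x*b) + 10*(s*t)), e3]
  have key3 : (b^2+t^2)^2 ≤ b^4 + 0.00052*b^2 := by nlinarith [sq_nonneg t, ht2', hb2l]
  have key4 : (0.2015:ℝ) ≤ (b^2+t^2)^2 := by nlinarith [sq_nonneg t, hb2l]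
  have hg1 : (0:ℝ) ≤ (0.99*x^2 - 0.3934*a^2) + 0.072 := by
    nlinarith [sq_nonneg (0.5966*a + 0.99*(x-a)), hr2']
  have hg2 : 0.2966*a^2 - 0.356 ≤ 0.99*x^2 - 0.3934*a^2 := by
    nlinarith [sq_nonneg (a + 3.3*(x-a)), hr2']
  have hp1 : a^2 * (b^2+t^2)^2 ≤ a^2 * (b^4 + 0.00052*b^2) :=
    mul_le_mul_of_nonneg_left key3 ha2
  have hp2 : a^2*b^4 ≤ 1.7689*(a^2*b^2) := by nlinarith [mul_nonneg ha2 (sq_nonneg b)]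
  have hp3 : (0:ℝ) ≤ (b^2 - 0.4489) * ((0.99*x^2 - 0.3934*a^2) + 0.072) :=
    mul_nonneg (by linarith) hg1
  have hid : (x^2 - s^2) * (b^2 - t^2) + 4*x*s*b*t
      = (x*b + s*t)^2 - (s*b - x*t)^2 := by ring
  rw [hid]
  nlinarith [key1, key2, key4, hp1, hp2, hp3, hg2, ha2, hb2u, hb2l]

/-- Lower bound for the real part of one perturbed quotient term. -/
lemma term_re_lower_aux (a : ℝ) (P Q : ℂ)
    (hPr : |P.re| ≤ 0.33) (hPi : |P.im| ≤ 0.016)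
    (hQr : |Q.re| ≤ 0.33) (hQi : |Q.im| ≤ 0.016) :
    2/9 * a^2 - 2 ≤ ((((a:ℂ) + P))^2 / ((1 + Q))^2).re := by
  set x := a + P.re with hxdef
  set s := P.im
  set b := 1 + Q.re with hbdef
  set t := Q.im
  have hbpos : (0:ℝ) < b^2 + t^2 := by
    have : (0.67:ℝ) ≤ b := by
      have := (abs_le.mp hQr).1; rw [hbdef]; linarith
    nlinarith [sq_nonneg t]
  have hre : ((((a:ℂ) + P))^2 / ((1 + Q))^2).re
      = ((x^2 - s^2) * (b^2 - t^2) + 4*x*s*b*t) / ((b^2 + t^2)^2) := by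
    rw [Complex.div_re]
    simp only [pow_two, Complex.mul_re, Complex.mul_im, Complex.add_re, Complex.add_im,
      Complex.one_re, Complex.one_im, Complex.ofReal_re, Complex.ofReal_im,
      Complex.normSq_apply]
    rw [hxdef, hbdef]
    field_simp
    ring
  rw [hre, le_div_iff₀ (by positivity)]
  have h1 : |x - a| ≤ 0.33 := by rw [hxdef]; simpa using hPr
  have h2 : |b - 1| ≤ 0.33 := by rw [hbdef]; simpa using hQr
  exact core_ineq_aux a x s b t h1 hPi h2 hQi

/-- Bounds on the perturbation polynomials on the closed ball. -/
lemma poly_re_im_bounds_aux {M R ε : ℝ} {c1 c2 : ℝ} {w : ℂ}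
    (hM : 1 ≤ M) (hε : 0 ≤ ε) (hMε : M*ε ≤ 1/4) (hR : 0 < R) (hRM : M*R ≤ 1/100)
    (hc1 : |c1| ≤ M) (hc2 : |c2| ≤ M) (hw : w ∈ Metric.closedBall (ε:ℂ) R) :
    |((c1:ℂ)*w + (c2:ℂ)*w^2).re| ≤ 0.33 ∧ |((c1:ℂ)*w + (c2:ℂ)*w^2).im| ≤ 0.016 := by
  have hM0 : (0:ℝ) ≤ M := le_trans zero_le_one hM
  have hdist : ‖w - ε‖ ≤ R := by
    rwa [Metric.mem_closedBall, Complex.dist_eq] at hw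
  have habsw : ‖w‖ ≤ ε + R := by
    have h := norm_add_le (ε:ℂ) (w - ε)
    simp only [add_sub_cancel, Complex.norm_real, Real.norm_eq_abs, _root_.abs_of_nonneg hε] at h
    linarith
  have hMw : M * ‖w‖ ≤ 0.26 := by
    have := mul_le_mul_of_nonneg_left habsw hM0
    nlinarith
  have hw26 : ‖w‖ ≤ 0.26 := by
    nlinarith [norm_nonneg w]
  have habs : ‖(c1:ℂ)*w + (c2:ℂ)*w^2‖ ≤ 0.33 := by
    calc ‖(c1:ℂ)*w + (c2:ℂ)*w^2‖
        ≤ ‖(c1:ℂ)*w‖ + ‖(c2:ℂ)*w^2‖ := norm_add_le _ _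
      _ = |c1| * ‖w‖ + |c2| * (‖w‖)^2 := by
          simp [norm_mul, Complex.norm_real, norm_pow]
      _ ≤ M * ‖w‖ + M * (‖w‖)^2 :=
          add_le_add (mul_le_mul_of_nonneg_right hc1 (norm_nonneg w))
            (mul_le_mul_of_nonneg_right hc2 (by positivity))
      _ ≤ 0.33 := by nlinarith [norm_nonneg w]
  constructor
  · exact (Complex.abs_re_le_norm _).trans habs
  · have him_w : |w.im| ≤ R := by
      have h := Complex.abs_im_le_norm (w - ε)
      simp only [Complex.sub_im, Complex.ofReal_im, sub_zero] at h
      linarith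
    have hre_w : |w.re| ≤ 0.26 := (Complex.abs_re_le_norm w).trans hw26
    have hAim : ((c1:ℂ)*w + (c2:ℂ)*w^2).im = c1*w.im + c2*(w.re*w.im + w.im*w.re) := by
      simp [pow_two, Complex.add_im, Complex.mul_im, Complex.mul_re]
    rw [hAim]
    have e1 : |c1 * w.im| ≤ M * R := by
      rw [abs_mul]; exact mul_le_mul hc1 him_w (abs_nonneg _) hM0
    have e2 : |c2 * (w.re*w.im + w.im*w.re)| ≤ M * (2*(0.26*R)) := by
      rw [abs_mul]
      apply mul_le_mul hc2 ?_ (abs_nonneg _) hM0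
      have h3 : w.re*w.im + w.im*w.re = 2*(w.re*w.im) := by ring
      rw [h3, abs_mul, abs_mul]
      have : |w.re| * |w.im| ≤ 0.26 * R :=
        mul_le_mul hre_w him_w (abs_nonneg _) (by norm_num)
      rw [show |(2:ℝ)| = 2 by norm_num]
      linarith
    calc |c1*w.im + c2*(w.re*w.im + w.im*w.re)|
        ≤ |c1 * w.im| + |c2 * (w.re*w.im + w.im*w.re)| := abs_add_le _ _
      _ ≤ M * R + M * (2*(0.26*R)) := add_le_add e1 e2
      _ ≤ 0.016 := by nlinarith

/-- The perturbed Gaussian quadratic form `γ(ε)`. -/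
noncomputable def gammaForm (d1 d2 g1 g2 u y z ε : ℝ) : ℝ :=
  (u + d1 * ε - g1 * ε ^ 2) ^ 2 / (1 - d2 * ε + g2 * ε ^ 2) ^ 2
    + (y + 2 * g1 * ε ^ 2) ^ 2 / (1 + 2 * g2 * ε ^ 2) ^ 2
    + (z - d1 * ε - g1 * ε ^ 2) ^ 2 / (1 + d2 * ε + g2 * ε ^ 2) ^ 2

/-- `M = max{1, |δ̃₁|, 2|γ̃₁|, |δ̃₂|, 2|γ̃₂|}`. -/
noncomputable def Mconst (d1 d2 g1 g2 : ℝ) : ℝ :=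
  max 1 (max |d1| (max (2 * |g1|) (max |d2| (2 * |g2|))))

/-- for every `ε ≥ 0` with `M·ε ≤ 1/4`, the third derivative in `ε` of
`ε ↦ exp(−γ(ε)/2)` satisfies `|d³/dε³ exp(−γ(ε)/2)| ≤ 500³·M³·(ρ²+1)³·exp(−ρ²/9)`,
where `ρ² = u² + y² + z²`. -/
theorem third_derivative_bound_exp_gammaForm (d1 d2 g1 g2 u y z : ℝ) :
    ∀ ε : ℝ, 0 ≤ ε → Mconst d1 d2 g1 g2 * ε ≤ 1 / 4 →
      |iteratedDeriv 3 (fun e => Real.exp (-(gammaForm d1 d2 g1 g2 u y z e) / 2)) ε|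
        ≤ 500 ^ 3 * (Mconst d1 d2 g1 g2) ^ 3 * ((u ^ 2 + y ^ 2 + z ^ 2) + 1) ^ 3 *
            Real.exp (-(u ^ 2 + y ^ 2 + z ^ 2) / 9) := by
  intro ε hε hMε
  obtain ⟨M, hMdef⟩ : ∃ m : ℝ, m = Mconst d1 d2 g1 g2 := ⟨_, rfl⟩
  rw [← hMdef] at hMε ⊢
  obtain ⟨ρ2, hρ2def⟩ : ∃ r : ℝ, r = u ^ 2 + y ^ 2 + z ^ 2 := ⟨_, rfl⟩
  rw [← hρ2def]
  obtain ⟨S, hSdef⟩ : ∃ s : ℝ, s = ρ2 + 1 := ⟨_, rfl⟩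
  rw [show ρ2 + 1 = S from hSdef.symm]
  obtain ⟨R, hRdef⟩ : ∃ r : ℝ, r = 1 / (100 * M * S) := ⟨_, rfl⟩
  have hM : 1 ≤ M := hMdef ▸ le_max_left _ _
  have hM0 : (0:ℝ) < M := lt_of_lt_of_le one_pos hM
  have hd1 : |d1| ≤ M := hMdef ▸ le_trans (le_max_left _ _) (le_max_right _ _)
  have h2g1 : 2*|g1| ≤ M := hMdef ▸
    le_trans (le_trans (le_max_left _ _) (le_max_right _ _)) (le_max_right _ _)
  have hd2 : |d2| ≤ M := hMdef ▸
    le_trans (le_trans (le_trans (le_max_left _ _) (le_max_right _ _)) (le_max_right _ _))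
      (le_max_right _ _)
  have h2g2 : 2*|g2| ≤ M := hMdef ▸
    le_trans (le_trans (le_trans (le_max_right _ _) (le_max_right _ _)) (le_max_right _ _))
      (le_max_right _ _)
  have hg1 : |g1| ≤ M := by linarith [abs_nonneg g1]
  have hg2 : |g2| ≤ M := by linarith [abs_nonneg g2]
  have hρ2 : 0 ≤ ρ2 := by rw [hρ2def]; positivity
  have hS : 1 ≤ S := by rw [hSdef]; linarith
  have hS0 : (0:ℝ) < S := by linarith
  have hR : 0 < R := by
    rw [hRdef]
    exact one_div_pos.mpr (by nlinarith [mul_pos hM0 hS0])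
  have hMR : M * R = 1/(100*S) := by
    rw [hRdef]
    field_simp
  have hRM : M * R ≤ 1/100 := by
    rw [hMR, div_le_div_iff₀ (by linarith) (by norm_num)]
    linarith
  -- the complex extension
  set G : ℂ → ℂ := fun w =>
    ((u:ℂ) + (((d1:ℝ):ℂ)*w + ((-g1:ℝ):ℂ)*w^2))^2
      / ((1:ℂ) + (((-d2:ℝ):ℂ)*w + ((g2:ℝ):ℂ)*w^2))^2
    + ((y:ℂ) + (((0:ℝ):ℂ)*w + ((2*g1:ℝ):ℂ)*w^2))^2
      / ((1:ℂ) + (((0:ℝ):ℂ)*w + ((2*g2:ℝ):ℂ)*w^2))^2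
    + ((z:ℂ) + (((-d1:ℝ):ℂ)*w + ((-g1:ℝ):ℂ)*w^2))^2
      / ((1:ℂ) + (((d2:ℝ):ℂ)*w + ((g2:ℝ):ℂ)*w^2))^2 with hGdef
  set F : ℂ → ℂ := fun w => Complex.exp (-(G w)/2) with hFdef
  have hb0 : |(0:ℝ)| ≤ M := by simpa using hM0.le
  have hbnd : ∀ (c1 c2 : ℝ), |c1| ≤ M → |c2| ≤ M → ∀ w ∈ Metric.closedBall (ε:ℂ) R,
      |((c1:ℂ)*w + (c2:ℂ)*w^2).re| ≤ 0.33 ∧ |((c1:ℂ)*w + (c2:ℂ)*w^2).im| ≤ 0.016 :=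
    fun c1 c2 hc1 hc2 w hw => poly_re_im_bounds_aux hM hε hMε hR hRM hc1 hc2 hw
  have hden : ∀ (e1 e2 : ℝ), |e1| ≤ M → |e2| ≤ M → ∀ w ∈ Metric.closedBall (ε:ℂ) R,
      ((1:ℂ) + (((e1:ℝ):ℂ)*w + ((e2:ℝ):ℂ)*w^2)) ≠ 0 := by
    intro e1 e2 he1 he2 w hw hcontra
    have hb := ((hbnd e1 e2 he1 he2 w hw).1)
    have hb' := (abs_le.mp hb).1
    rw [Complex.add_re] at hb'
    have h0 := congrArg Complex.re hcontra
    simp only [Complex.add_re, Complex.one_re, Complex.zero_re] at h0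
    linarith
  have hpoly : ∀ (c1 c2 : ℝ) (a : ℂ),
      Differentiable ℂ (fun w : ℂ => (a + ((c1:ℂ)*w + (c2:ℂ)*w^2))^2) := by
    intro c1 c2 a
    fun_prop
  have hdiff : DifferentiableOn ℂ F (Metric.closedBall (ε:ℂ) R) := by
    rw [hFdef]
    apply DifferentiableOn.cexp
    apply DifferentiableOn.div_const
    apply DifferentiableOn.neg
    rw [hGdef]
    apply DifferentiableOn.add
    apply DifferentiableOn.add
    · exact DifferentiableOn.div ((hpoly _ _ _).differentiableOn)
        ((hpoly _ _ _).differentiableOn)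
        (fun w hw => pow_ne_zero 2 (hden _ _ (by simpa using hd2) hg2 w hw))
    · exact DifferentiableOn.div ((hpoly _ _ _).differentiableOn)
        ((hpoly _ _ _).differentiableOn)
        (fun w hw => pow_ne_zero 2 (hden _ _ hb0 (by simpa [abs_mul] using h2g2) w hw))
    · exact DifferentiableOn.div ((hpoly _ _ _).differentiableOn)
        ((hpoly _ _ _).differentiableOn)
        (fun w hw => pow_ne_zero 2 (hden _ _ hd2 hg2 w hw))
  have hsphere : ∀ w ∈ Metric.sphere (ε:ℂ) R,
      ‖F w‖ ≤ Real.exp 3 * Real.exp (-ρ2/9) := by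
    intro w hw
    have hw' : w ∈ Metric.closedBall (ε:ℂ) R := sphere_subset_closedBall hw
    have hb1 := hbnd d1 (-g1) hd1 (by simpa using hg1) w hw'
    have hb2 := hbnd (-d2) g2 (by simpa using hd2) hg2 w hw'
    have hb3 := hbnd 0 (2*g1) hb0 (by simpa [abs_mul] using h2g1) w hw'
    have hb4 := hbnd 0 (2*g2) hb0 (by simpa [abs_mul] using h2g2) w hw'
    have hb5 := hbnd (-d1) (-g1) (by simpa using hd1) (by simpa using hg1) w hw'
    have hb6 := hbnd d2 g2 hd2 hg2 w hw'
    have ht1 := term_re_lower_aux u _ _ hb1.1 hb1.2 hb2.1 hb2.2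
    have ht2 := term_re_lower_aux y _ _ hb3.1 hb3.2 hb4.1 hb4.2
    have ht3 := term_re_lower_aux z _ _ hb5.1 hb5.2 hb6.1 hb6.2
    have hGre : 2/9*ρ2 - 6 ≤ (G w).re := by
      rw [hGdef]
      simp only [Complex.add_re]
      rw [hρ2def]
      linarith
    have hnorm : ‖F w‖ = Real.exp (-(G w).re/2) := by
      rw [hFdef]
      simp only [Complex.norm_exp]
      congr 1
      simp [Complex.div_re, Complex.normSq, Complex.neg_re, Complex.neg_im]
    rw [hnorm, ← Real.exp_add]
    apply Real.exp_le_exp.mpr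
    linarith
  have hcauchy := cauchy_bound_aux hR hdiff hsphere 3
  have hfun : (fun e => Real.exp (-(gammaForm d1 d2 g1 g2 u y z e) / 2))
      = fun t : ℝ => (F (t:ℂ)).re := by
    funext t
    have hGt : G (t:ℂ) = ((gammaForm d1 d2 g1 g2 u y z t : ℝ) : ℂ) := by
      rw [hGdef]
      simp only [gammaForm]
      push_cast
      ring
    rw [hFdef]
    simp only
    rw [hGt, show -(((gammaForm d1 d2 g1 g2 u y z t : ℝ)):ℂ)/2
        = (((-(gammaForm d1 d2 g1 g2 u y z t)/2 : ℝ)):ℂ) by push_cast; ring,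
      ← Complex.ofReal_exp, Complex.ofReal_re]
  rw [hfun]
  have hdiffball : DifferentiableOn ℂ F (Metric.ball (ε:ℂ) R) :=
    hdiff.mono Metric.ball_subset_closedBall
  have htrans := iteratedDeriv_re_comp_aux Metric.isOpen_ball hdiffball 3 ε
    (Metric.mem_ball_self hR)
  rw [htrans]
  have habs : |(iteratedDeriv 3 F (ε:ℂ)).re| ≤ ‖iteratedDeriv 3 F (ε:ℂ)‖ := by
    exact Complex.abs_re_le_norm _
  have hfact : (((3:ℕ).factorial : ℕ) : ℝ) = 6 := by norm_num [Nat.factorial]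
  have hexp3 : Real.exp 3 ≤ 20.1 := by
    have h1 : Real.exp 3 = (Real.exp 1)^3 := by
      rw [← Real.exp_nat_mul]; norm_num
    have h2 := pow_le_pow_left₀ (Real.exp_pos 1).le Real.exp_one_lt_d9.le 3
    rw [h1]
    refine h2.trans ?_
    norm_num
  have hE : 0 < Real.exp (-ρ2/9) := Real.exp_pos _
  have hR3 : R^3 = 1/(100*M*S)^3 := by rw [hRdef, one_div, one_div, inv_pow]
  have hfinal : (6:ℝ) * (Real.exp 3 * Real.exp (-ρ2/9)) / R^3
      ≤ 500^3 * M^3 * S^3 * Real.exp (-ρ2/9) := by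
    rw [hR3, div_le_iff₀ (by positivity)]
    have expand : 500^3 * M^3 * S^3 * Real.exp (-ρ2/9) * (1/(100*M*S)^3)
        = 125 * Real.exp (-ρ2/9) := by
      field_simp
      ring
    rw [expand]
    nlinarith [hE, hexp3]
  calc |(iteratedDeriv 3 F (ε:ℂ)).re| ≤ ‖iteratedDeriv 3 F (ε:ℂ)‖ := habs
    _ ≤ (3:ℕ).factorial * (Real.exp 3 * Real.exp (-ρ2/9)) / R^3 := hcauchy
    _ = 6 * (Real.exp 3 * Real.exp (-ρ2/9)) / R^3 := by rw [hfact]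
    _ ≤ 500^3 * M^3 * S^3 * Real.exp (-ρ2/9) := hfinal
end
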